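/- arXiv:1204.4399 — 2 statements merged into one kernel-verified Lean document; each statement's English description precedes it below -/
import Mathlib

section
/- Let m ≥ 1, let U' ⊆ ℂ^m be open with s₀ ∈ U', and let u : U' → U and ξ : U' → (ℂ^{N+1})* be maps of class C^∞ such that ξ(s)(x̂^I(u(s))) = 0 for all s ∈ U' and all multi-indices I ∈ ℕ^k with |I| ≤ t (i.e., s ↦ ξ(s) is a family of hyperplanes of the t-th dual variety of V containing the t-th osculating spaces along s ↦ x(u(s))). Then for all multi-indices J ∈ ℕ^m and I ∈ ℕ^k with |J| + |I| ≤ t one has (∂^J ξ)(s₀)(x̂^I(u(s₀))) = 0. In particular: every tangent vector to the t-th dual variety at ξ(s₀) annihilates T^(t−1)(u(s₀)) (i.e. T̃^(t−1)_P(V) ⊆ C^(1)_{t,P}(V)), and every derivative ∂^J ξ(s₀) with |J| ≤ t vanishes at x̂(u(s₀)) (i.e. P ∈ C^(s)_{t,P}(V) for s ≤ t). -/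
/- Common setup: iterated partial derivatives, multi-indices, osculating spaces,
fundamental forms for a local parametrisation `x : ℂ^k → ℂ^N` of a variety
`V ⊂ ℙ^N`, lifted to `x̂ = (1, x) : ℂ^k → ℂ^{N+1}`. -/

open scoped BigOperators

noncomputable section

/-- Iterated partial derivative of `f` along a list of coordinate directions. -/
def pderivList {k : ℕ} {E : Type} [NormedAddCommGroup E] [NormedSpace ℂ E] :
    List (Fin k) → ((Fin k → ℂ) → E) → ((Fin k → ℂ) → E)
  | [], f => f
  | j :: L, f => fun u => fderiv ℂ (pderivList L f) u (Pi.single j 1)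

/-- The canonical list of coordinate directions attached to a multi-index `I : Fin k → ℕ`
(the direction `j` repeated `I j` times). -/
def idxList {k : ℕ} (I : Fin k → ℕ) : List (Fin k) :=
  (List.finRange k).flatMap fun j => List.replicate (I j) j

/-- The partial derivative `∂^I f = ∂^{|I|} f / ∂u₁^{i₁} ⋯ ∂u_k^{i_k}`. -/
def pd {k : ℕ} {E : Type} [NormedAddCommGroup E] [NormedSpace ℂ E]
    (I : Fin k → ℕ) (f : (Fin k → ℂ) → E) : (Fin k → ℂ) → E :=
  pderivList (idxList I) f

/-- The finset of multi-indices `I : Fin k → ℕ` of total degree `|I| ≤ r`. -/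
def degLE (k r : ℕ) : Finset (Fin k → ℕ) :=
  (Finset.Iic fun _ : Fin k => r).filter fun I => (∑ j, I j) ≤ r

/-- The finset of multi-indices `I : Fin k → ℕ` of total degree `|I| = r`. -/
def degEq (k r : ℕ) : Finset (Fin k → ℕ) :=
  (Finset.Iic fun _ : Fin k => r).filter fun I => (∑ j, I j) = r

/-- The lift `x̂(u) = (1, x(u))` of the parametrisation `x` to the affine cone `ℂ^{N+1}`. -/
def coneLift {k N : ℕ} (x : (Fin k → ℂ) → (Fin N → ℂ)) : (Fin k → ℂ) → (Fin (N + 1) → ℂ) :=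
  fun u => Fin.cons 1 (x u)

/-- `osc x̂ s u` is the affine cone `T^(s)(u)` over the `s`-th osculating space at the point of
parameter `u`: the span of all partial derivatives `x̂^I(u)` with `|I| ≤ s`. -/
def osc {k N : ℕ} (xhat : (Fin k → ℂ) → (Fin (N + 1) → ℂ)) (s : ℕ) (u : Fin k → ℂ) :
    Submodule ℂ (Fin (N + 1) → ℂ) :=
  Submodule.span ℂ {y | ∃ I : Fin k → ℕ, (∑ j, I j) ≤ s ∧ y = pd I xhat u}

/-- The degree-`r` form `F^r_ξ(v) = ξ(D^r x̂(u₀)(v,…,v))`, as a function of `v ∈ ℂ^k`. -/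
def formOf {k N : ℕ} (xhat : (Fin k → ℂ) → (Fin (N + 1) → ℂ)) (u₀ : Fin k → ℂ) (r : ℕ)
    (ξ : Module.Dual ℂ (Fin (N + 1) → ℂ)) : (Fin k → ℂ) → ℂ :=
  fun v => ξ (iteratedFDeriv ℂ r xhat u₀ fun _ => v)

/-- The `r`-th fundamental form `|I^r|` of `V` at `P`, as the set of the forms `F^r_ξ` for `ξ`
a linear functional vanishing on `T^(r-1)(u₀)`. -/
def fundSet {k N : ℕ} (xhat : (Fin k → ℂ) → (Fin (N + 1) → ℂ)) (u₀ : Fin k → ℂ) (r : ℕ) :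
    Set ((Fin k → ℂ) → ℂ) :=
  { F | ∃ ξ : Module.Dual ℂ (Fin (N + 1) → ℂ),
      (∀ y ∈ osc xhat (r - 1) u₀, ξ y = 0) ∧ F = formOf xhat u₀ r ξ }

/-- The `r`-th fundamental form `|I^r|` as a subspace of the space of functions of `v`. -/
def fundForm {k N : ℕ} (xhat : (Fin k → ℂ) → (Fin (N + 1) → ℂ)) (u₀ : Fin k → ℂ) (r : ℕ) :
    Submodule ℂ ((Fin k → ℂ) → ℂ) :=
  Submodule.span ℂ (fundSet xhat u₀ r)

/-- The linear map sending the coefficients `(E_I)_{|I|=t}` of a degree-`t` form to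
`∑_{|I|=t} E_I x̂^I(u₀) ∈ ℂ^{N+1}`; a form is the symbol of a Laplace equation of order `t`
iff its coefficients are mapped into `T^(t-1)(u₀)`. -/
def symbolMap {k N : ℕ} (xhat : (Fin k → ℂ) → (Fin (N + 1) → ℂ)) (u₀ : Fin k → ℂ) (t : ℕ) :
    ({I : Fin k → ℕ // I ∈ degEq k t} → ℂ) →ₗ[ℂ] (Fin (N + 1) → ℂ) where
  toFun E := ∑ I : {I : Fin k → ℕ // I ∈ degEq k t}, E I • pd I.1 xhat u₀
  map_add' a b := by simp [add_smul, Finset.sum_add_distrib]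
  map_smul' c a := by simp [smul_smul, Finset.smul_sum]

/-- The parametrisation `Φ_t(u, λ) = ∑_{|I| ≤ t} λ_I x̂^I(u)` of the affine cone over the
`t`-th osculating variety `Tan^t(V)`. -/
def tanPhi {k N : ℕ} (xhat : (Fin k → ℂ) → (Fin (N + 1) → ℂ)) (t : ℕ) :
    ((Fin k → ℂ) × ({I : Fin k → ℕ // I ∈ degLE k t} → ℂ)) → (Fin (N + 1) → ℂ) :=
  fun p => ∑ I : {I : Fin k → ℕ // I ∈ degLE k t}, p.2 I • pd I.1 xhat p.1

/-- The rank of the Jacobian matrix of a linear system `S` of degree-`r` forms: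
the maximum over `v ∈ ℂ^k` of the dimension of the span of the gradients at `v`
of the members of `S`. -/
def jacRank (k : ℕ) (S : Set ((Fin k → ℂ) → ℂ)) : ℕ :=
  sSup {r : ℕ | ∃ v : Fin k → ℂ,
    r = Module.finrank ℂ
      ↥(Submodule.span ℂ {g : Fin k → ℂ | ∃ F ∈ S, g = fun j => pd (Pi.single j 1) F v})}

/-- The coefficients of the reducible degree-`(t+1)` form
`(∑_j w_j v_j) · (∑_{|I| = t} λ_I v^I)`. -/
def prodSymb {k : ℕ} (t : ℕ) (w : Fin k → ℂ) (lam : {I : Fin k → ℕ // I ∈ degLE k t} → ℂ)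
    (J : Fin k → ℕ) : ℂ :=
  ∑ j : Fin k,
    if h : 1 ≤ J j ∧ (J - Pi.single j 1 : Fin k → ℕ) ∈ degLE k t ∧
        (∑ i, (J - Pi.single j 1 : Fin k → ℕ) i) = t
    then w j * lam ⟨(J - Pi.single j 1 : Fin k → ℕ), h.2.1⟩ else 0


theorem pderivList_contDiffOn {k : ℕ} {E : Type} [NormedAddCommGroup E] [NormedSpace ℂ E]
    {U : Set (Fin k → ℂ)} (hU : IsOpen U) {f : (Fin k → ℂ) → E}
    (hf : ContDiffOn ℂ (⊤ : ℕ∞) f U) :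
    ∀ L : List (Fin k), ContDiffOn ℂ (⊤ : ℕ∞) (pderivList L f) U := by
  intro L
  induction L with
  | nil => exact hf
  | cons j L ih =>
    show ContDiffOn ℂ (⊤ : ℕ∞) (fun u => fderiv ℂ (pderivList L f) u (Pi.single j 1)) U
    exact (ih.fderiv_of_isOpen hU (by simp)).clm_apply contDiffOn_const

theorem pderivList_diffAt {k : ℕ} {E : Type} [NormedAddCommGroup E] [NormedSpace ℂ E]
    {U : Set (Fin k → ℂ)} (hU : IsOpen U) {f : (Fin k → ℂ) → E}
    (hf : ContDiffOn ℂ (⊤ : ℕ∞) f U) (L : List (Fin k)) {x : Fin k → ℂ} (hx : x ∈ U) :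
    DifferentiableAt ℂ (pderivList L f) x :=
  ((pderivList_contDiffOn hU hf L).differentiableOn (by simp) x hx).differentiableAt
    (hU.mem_nhds hx)


theorem fderiv_eval {k : ℕ} {E : Type} [NormedAddCommGroup E] [NormedSpace ℂ E]
    {g : (Fin k → ℂ) → E} {x : Fin k → ℂ}
    (hg : DifferentiableAt ℂ (fderiv ℂ g) x) (v w : Fin k → ℂ) :
    fderiv ℂ (fun y => fderiv ℂ g y v) x w = fderiv ℂ (fderiv ℂ g) x w v := by
  have h := (ContinuousLinearMap.apply ℂ E v).hasFDerivAt.comp x hg.hasFDerivAt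
  have : fderiv ℂ (fun y => fderiv ℂ g y v) x
      = (ContinuousLinearMap.apply ℂ E v).comp (fderiv ℂ (fderiv ℂ g) x) := h.fderiv
  rw [this]; rfl

theorem pderivList_swap {k : ℕ} {E : Type} [NormedAddCommGroup E] [NormedSpace ℂ E]
    {U : Set (Fin k → ℂ)} (hU : IsOpen U) {f : (Fin k → ℂ) → E}
    (hf : ContDiffOn ℂ (⊤ : ℕ∞) f U) (a b : Fin k) (L : List (Fin k))
    {x : Fin k → ℂ} (hx : x ∈ U) :
    pderivList (a :: b :: L) f x = pderivList (b :: a :: L) f x := by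
  set g := pderivList L f with hg
  have hgC : ContDiffOn ℂ (⊤ : ℕ∞) g U := pderivList_contDiffOn hU hf L
  have hgat : ContDiffAt ℂ (⊤ : ℕ∞) g x := hgC.contDiffAt (hU.mem_nhds hx)
  have hsymm : IsSymmSndFDerivAt ℂ g x := hgat.isSymmSndFDerivAt (by
    have : ((2:ℕ∞) : WithTop ℕ∞) ≤ ((⊤:ℕ∞) : WithTop ℕ∞) := WithTop.coe_le_coe.2 le_top
    simpa using this)
  have hdiff : DifferentiableAt ℂ (fderiv ℂ g) x := by
    have := (hgC.fderiv_of_isOpen (m := (⊤:ℕ∞)) hU (by simp)).differentiableOn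
      (by simp) x hx
    exact this.differentiableAt (hU.mem_nhds hx)
  show fderiv ℂ (fun y => fderiv ℂ g y (Pi.single b 1)) x (Pi.single a 1)
      = fderiv ℂ (fun y => fderiv ℂ g y (Pi.single a 1)) x (Pi.single b 1)
  rw [fderiv_eval hdiff, fderiv_eval hdiff]
  exact hsymm _ _

theorem pderivList_perm {k : ℕ} {E : Type} [NormedAddCommGroup E] [NormedSpace ℂ E]
    {U : Set (Fin k → ℂ)} (hU : IsOpen U) {f : (Fin k → ℂ) → E}
    (hf : ContDiffOn ℂ (⊤ : ℕ∞) f U) {M M' : List (Fin k)} (hp : M.Perm M') :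
    ∀ x ∈ U, pderivList M f x = pderivList M' f x := by
  induction hp with
  | nil => intro x _; rfl
  | cons a h ih =>
    intro x hx
    show fderiv ℂ (pderivList _ f) x (Pi.single a 1) = fderiv ℂ (pderivList _ f) x (Pi.single a 1)
    rw [Filter.EventuallyEq.fderiv_eq
      (Filter.eventuallyEq_of_mem (hU.mem_nhds hx) fun y hy => ih y hy)]
  | swap a b l => intro x hx; exact pderivList_swap hU hf b a l hx
  | trans h1 h2 ih1 ih2 => intro x hx; rw [ih1 x hx, ih2 x hx]

theorem idxList_length {k : ℕ} (I : Fin k → ℕ) : (idxList I).length = ∑ j, I j := by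
  simp [idxList, Fin.sum_univ_def, Function.comp_def]

theorem idxList_count {k : ℕ} (I : Fin k → ℕ) (a : Fin k) : (idxList I).count a = I a := by
  classical
  simp only [idxList, List.count_flatMap, Function.comp_def, List.count_replicate]
  rw [← Fin.sum_univ_def (fun j => if (j == a) = true then I j else 0)]
  simp [Finset.sum_ite_eq]

theorem idxList_perm {k : ℕ} (M : List (Fin k)) :
    (idxList fun j => M.count j).Perm M := by
  rw [List.perm_iff_count]
  intro a
  rw [idxList_count]

theorem coneLift_contDiffOn {k N : ℕ} {U : Set (Fin k → ℂ)} {x : (Fin k → ℂ) → (Fin N → ℂ)}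
    (hx : ContDiffOn ℂ (⊤ : ℕ∞) x U) : ContDiffOn ℂ (⊤ : ℕ∞) (coneLift x) U := by
  apply contDiffOn_pi.2
  intro i
  induction i using Fin.cases with
  | zero => simpa [coneLift] using contDiffOn_const
  | succ j => simpa [coneLift] using (contDiffOn_pi.1 hx) j

theorem main_key (k N t : ℕ)
    (U : Set (Fin k → ℂ)) (hU : IsOpen U)
    (x : (Fin k → ℂ) → (Fin N → ℂ)) (hx : ContDiffOn ℂ (⊤ : ℕ∞) x U)
    (m : ℕ) (U' : Set (Fin m → ℂ)) (hU' : IsOpen U')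
    (u : (Fin m → ℂ) → (Fin k → ℂ)) (hu : ContDiffOn ℂ (⊤ : ℕ∞) u U')
    (humaps : Set.MapsTo u U' U)
    (ξ : (Fin m → ℂ) → (Fin (N + 1) → ℂ)) (hξ : ContDiffOn ℂ (⊤ : ℕ∞) ξ U')
    (hvan : ∀ s ∈ U', ∀ I : Fin k → ℕ, (∑ j, I j) ≤ t →
      (∑ i, ξ s i * pd I (coneLift x) (u s) i) = 0) :
    ∀ L : List (Fin m), ∀ M : List (Fin k), L.length + M.length ≤ t →
      ∀ s ∈ U', (∑ i, pderivList L ξ s i * pderivList M (coneLift x) (u s) i) = 0 := by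
  have hxhat : ContDiffOn ℂ (⊤ : ℕ∞) (coneLift x) U := coneLift_contDiffOn hx
  intro L
  induction L with
  | nil =>
    intro M hlen s hs
    have hperm := idxList_perm M
    have hMlen : (∑ j, M.count j) = M.length := by
      rw [← idxList_length (fun j => M.count j)]
      exact hperm.length_eq
    have h1 : pderivList M (coneLift x) (u s)
        = pd (fun j => M.count j) (coneLift x) (u s) :=
      (pderivList_perm hU hxhat hperm (u s) (humaps hs)).symm
    show (∑ i, ξ s i * pderivList M (coneLift x) (u s) i) = 0
    rw [h1]
    exact hvan s hs _ (by rw [hMlen]; simpa using hlen)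
  | cons a L' ih =>
    intro M hlen s hs
    set g := pderivList M (coneLift x) with hgdef
    set F := pderivList L' ξ with hFdef
    have hgC : ContDiffOn ℂ (⊤ : ℕ∞) g U := pderivList_contDiffOn hU hxhat M
    have hFd : HasFDerivAt F (fderiv ℂ F s) s :=
      (pderivList_diffAt hU' hξ L' hs).hasFDerivAt
    have hud : HasFDerivAt u (fderiv ℂ u s) s :=
      ((hu.differentiableOn (by simp) s hs).differentiableAt
        (hU'.mem_nhds hs)).hasFDerivAt
    have hgd : HasFDerivAt g (fderiv ℂ g (u s)) (u s) :=
      (pderivList_diffAt hU hxhat M (humaps hs)).hasFDerivAt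
    set A' := fderiv ℂ F s with hA'
    set B' := (fderiv ℂ g (u s)).comp (fderiv ℂ u s) with hB'
    have hcomp : HasFDerivAt (fun s' => g (u s')) B' s := hgd.comp s hud
    have hGi : ∀ i : Fin (N+1), HasFDerivAt (fun s' => F s' i * g (u s') i)
        (F s i • ((ContinuousLinearMap.proj i).comp B')
          + g (u s) i • ((ContinuousLinearMap.proj i).comp A')) s := by
      intro i
      have h1 : HasFDerivAt (fun s' => F s' i) ((ContinuousLinearMap.proj i).comp A') s := by
        have := (ContinuousLinearMap.proj (R := ℂ) (φ := fun _ : Fin (N+1) => ℂ) i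
          ).hasFDerivAt.comp s hFd
        exact this
      have h2 : HasFDerivAt (fun s' => g (u s') i) ((ContinuousLinearMap.proj i).comp B') s := by
        have := (ContinuousLinearMap.proj (R := ℂ) (φ := fun _ : Fin (N+1) => ℂ) i
          ).hasFDerivAt.comp s hcomp
        exact this
      exact h1.mul h2
    have hG : HasFDerivAt (fun s' => ∑ i, F s' i * g (u s') i)
        (∑ i, (F s i • ((ContinuousLinearMap.proj i).comp B')
          + g (u s) i • ((ContinuousLinearMap.proj i).comp A'))) s :=
      HasFDerivAt.fun_sum fun i _ => hGi i
    have hzero : (fun s' => ∑ i, F s' i * g (u s') i) =ᶠ[nhds s] (fun _ => (0:ℂ)) :=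
      Filter.eventuallyEq_of_mem (hU'.mem_nhds hs) fun y hy =>
        ih M (by simp only [List.length_cons] at hlen; omega) y hy
    have hD0 : (∑ i, (F s i • ((ContinuousLinearMap.proj i).comp B')
          + g (u s) i • ((ContinuousLinearMap.proj i).comp A'))) = 0 := by
      have h0 : HasFDerivAt (fun _ : Fin m → ℂ => (0:ℂ))
          (∑ i, (F s i • ((ContinuousLinearMap.proj i).comp B')
            + g (u s) i • ((ContinuousLinearMap.proj i).comp A'))) s :=
        hG.congr_of_eventuallyEq hzero.symm
      exact h0.unique (hasFDerivAt_const 0 s)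
    -- evaluate at Pi.single a 1
    have hEval : (∑ i, (F s i * (B' (Pi.single a 1) i)
        + g (u s) i * (A' (Pi.single a 1) i))) = 0 := by
      have := congrArg (fun (T : (Fin m → ℂ) →L[ℂ] ℂ) => T (Pi.single a 1)) hD0
      simpa using this
    -- first part vanishes
    set w := fderiv ℂ u s (Pi.single a 1) with hw
    have hlin : ∀ (T : (Fin k → ℂ) →L[ℂ] (Fin (N+1) → ℂ)) (v : Fin k → ℂ),
        T v = ∑ j, v j • T (Pi.single j 1) := by
      intro T v
      have hv : v = ∑ j, v j • (Pi.single j 1 : Fin k → ℂ) := by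
        ext i
        simp [Pi.single_apply, Finset.sum_ite_eq]
      calc T v = T (∑ j, v j • (Pi.single j 1 : Fin k → ℂ)) := by rw [← hv]
        _ = ∑ j, v j • T (Pi.single j 1) := by rw [map_sum]; simp
    have hBval : B' (Pi.single a 1) = ∑ j, w j • pderivList (j :: M) (coneLift x) (u s) := by
      show fderiv ℂ g (u s) w = _
      rw [hlin (fderiv ℂ g (u s)) w]
      rfl
    have hS1 : (∑ i, F s i * (B' (Pi.single a 1) i)) = 0 := by
      rw [hBval]
      calc (∑ i, F s i * (∑ j, w j • pderivList (j :: M) (coneLift x) (u s)) i)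
          = ∑ i, ∑ j, w j * (F s i * pderivList (j :: M) (coneLift x) (u s) i) := by
            refine Finset.sum_congr rfl fun i _ => ?_
            rw [Finset.sum_apply, Finset.mul_sum]
            refine Finset.sum_congr rfl fun j _ => ?_
            simp only [Pi.smul_apply, smul_eq_mul]
            ring
        _ = ∑ j, ∑ i, w j * (F s i * pderivList (j :: M) (coneLift x) (u s) i) :=
            Finset.sum_comm
        _ = ∑ j, w j * ∑ i, F s i * pderivList (j :: M) (coneLift x) (u s) i := by
            refine Finset.sum_congr rfl fun j _ => ?_
            rw [Finset.mul_sum]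
        _ = 0 := Finset.sum_eq_zero fun j _ => by
            rw [ih (j :: M) (by simp only [List.length_cons] at hlen ⊢; omega) s hs, mul_zero]
    have hS2 : (∑ i, g (u s) i * (A' (Pi.single a 1) i)) = 0 := by
      have hsplit : (∑ i, (F s i * (B' (Pi.single a 1) i)
          + g (u s) i * (A' (Pi.single a 1) i)))
          = (∑ i, F s i * (B' (Pi.single a 1) i))
            + (∑ i, g (u s) i * (A' (Pi.single a 1) i)) := Finset.sum_add_distrib
      rw [hsplit, hS1, zero_add] at hEval
      exact hEval
    show (∑ i, fderiv ℂ F s (Pi.single a 1) i * g (u s) i) = 0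
    rw [← hS2]
    exact Finset.sum_congr rfl fun i _ => mul_comm _ _

/-- If `s ↦ ξ(s)` is a smooth family of linear functionals annihilating all `x̂^I(u(s))`,
`|I| ≤ t`, along a smooth family of points, then `(∂^J ξ)(s₀)(x̂^I(u(s₀))) = 0` whenever
`|J| + |I| ≤ t`; in particular `T̃^(t-1)_P(V) ⊆ C^(1)_{t,P}(V)` and `P ∈ C^(s)_{t,P}(V)`. -/
theorem deriv_of_dual_family_annihilates (k N t : ℕ) (hk : 1 ≤ k) (hN : 1 ≤ N) (ht : 1 ≤ t)
    (U : Set (Fin k → ℂ)) (hU : IsOpen U) (u₀ : Fin k → ℂ) (hu₀ : u₀ ∈ U)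
    (x : (Fin k → ℂ) → (Fin N → ℂ)) (hx : ContDiffOn ℂ (⊤ : ℕ∞) x U)
    (m : ℕ) (hm : 1 ≤ m) (U' : Set (Fin m → ℂ)) (hU' : IsOpen U')
    (s₀ : Fin m → ℂ) (hs₀ : s₀ ∈ U')
    (u : (Fin m → ℂ) → (Fin k → ℂ)) (hu : ContDiffOn ℂ (⊤ : ℕ∞) u U')
    (humaps : Set.MapsTo u U' U)
    (ξ : (Fin m → ℂ) → (Fin (N + 1) → ℂ)) (hξ : ContDiffOn ℂ (⊤ : ℕ∞) ξ U')
    (hvan : ∀ s ∈ U', ∀ I : Fin k → ℕ, (∑ j, I j) ≤ t →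
      (∑ i, ξ s i * pd I (coneLift x) (u s) i) = 0) :
    ∀ J : Fin m → ℕ, ∀ I : Fin k → ℕ, (∑ a, J a) + (∑ j, I j) ≤ t →
      (∑ i, pd J ξ s₀ i * pd I (coneLift x) (u s₀) i) = 0 := by
  intro J I h
  exact main_key k N t U hU x hx m U' hU' u hu humaps ξ hξ hvan (idxList J) (idxList I)
    (by rw [idxList_length, idxList_length]; exact h) s₀ hs₀

end
end

section
/- Assume x is analytic on a connected open set U, that T^(t)(u) = T^(t−1)(u) for every u ∈ U, and that dim_ℂ T^(t−1)(u) is constant on U. Then the subspace T^(t−1)(u) is constant, T^(t−1)(u) = T^(t−1)(u₀) for all u ∈ U, and in particular x̂(u) ∈ T^(t−1)(u₀) for all u ∈ U; i.e., V is contained in the linear subspace ℙ^{d_{t−1}} = ℙ(T^(t−1)(u₀)) of ℙ^N. -/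
/- Common setup: iterated partial derivatives, multi-indices, osculating spaces,
fundamental forms for a local parametrisation `x : ℂ^k → ℂ^N` of a variety
`V ⊂ ℙ^N`, lifted to `x̂ = (1, x) : ℂ^k → ℂ^{N+1}`. -/

open scoped BigOperators

noncomputable section

section AuxLemmas

variable {k : ℕ} {E : Type} [NormedAddCommGroup E] [NormedSpace ℂ E]

lemma pderivList_append (L₁ L₂ : List (Fin k)) (f : (Fin k → ℂ) → E) :
    pderivList (L₁ ++ L₂) f = pderivList L₁ (pderivList L₂ f) := by
  induction L₁ with
  | nil => rfl
  | cons a L ih => simp only [List.cons_append, pderivList, List.append_eq, ih]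

variable [CompleteSpace E] {U : Set (Fin k → ℂ)} {f : (Fin k → ℂ) → E}

lemma analyticOnNhd_pderivList (hf : AnalyticOnNhd ℂ f U) (L : List (Fin k)) :
    AnalyticOnNhd ℂ (pderivList L f) U := by
  induction L with
  | nil => exact hf
  | cons a L ih =>
    intro u hu
    exact ((ContinuousLinearMap.apply ℂ E (Pi.single a 1)).analyticAt _).comp (ih.fderiv u hu)

-- fderiv of evaluated fderiv
lemma fderiv_fderiv_apply (g : (Fin k → ℂ) → E) (hg : AnalyticAt ℂ g u)
    (w z : Fin k → ℂ) :
    fderiv ℂ (fun v => fderiv ℂ g v w) u z = fderiv ℂ (fderiv ℂ g) u z w := by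
  have hd : DifferentiableAt ℂ (fderiv ℂ g) u := hg.fderiv.differentiableAt
  have h1 : HasFDerivAt (fun v => fderiv ℂ g v w)
      ((ContinuousLinearMap.apply ℂ E w).comp (fderiv ℂ (fderiv ℂ g) u)) u :=
    ((ContinuousLinearMap.apply ℂ E w).hasFDerivAt).comp u hd.hasFDerivAt
  rw [h1.fderiv]; rfl

lemma pderivList_swap_head (hU : IsOpen U) (hf : AnalyticOnNhd ℂ f U)
    (a b : Fin k) (L : List (Fin k)) {u : Fin k → ℂ} (hu : u ∈ U) :
    pderivList (a :: b :: L) f u = pderivList (b :: a :: L) f u := by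
  set g := pderivList L f with hgdef
  have hg : AnalyticOnNhd ℂ g U := analyticOnNhd_pderivList hf L
  have hga : AnalyticAt ℂ g u := hg u hu
  have hsym : IsSymmSndFDerivAt ℂ g u := by
    apply (hga.contDiffAt).isSymmSndFDerivAt (n := 2)
    simp
  have e1 : pderivList (a :: b :: L) f u
      = fderiv ℂ (fun v => fderiv ℂ g v (Pi.single b 1)) u (Pi.single a 1) := rfl
  have e2 : pderivList (b :: a :: L) f u
      = fderiv ℂ (fun v => fderiv ℂ g v (Pi.single a 1)) u (Pi.single b 1) := rfl
  rw [e1, e2, fderiv_fderiv_apply g hga, fderiv_fderiv_apply g hga, hsym]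

lemma pderivList_perm_s11 (hU : IsOpen U) (hf : AnalyticOnNhd ℂ f U)
    {L₁ L₂ : List (Fin k)} (hp : L₁.Perm L₂) :
    ∀ u ∈ U, pderivList L₁ f u = pderivList L₂ f u := by
  induction hp with
  | nil => intro u _; rfl
  | cons a h ih =>
    intro u hu
    show fderiv ℂ (pderivList _ f) u (Pi.single a 1) = fderiv ℂ (pderivList _ f) u (Pi.single a 1)
    have : fderiv ℂ (pderivList _ f) u = fderiv ℂ (pderivList _ f) u :=
      Filter.EventuallyEq.fderiv_eq <|
        Filter.eventuallyEq_of_mem (hU.mem_nhds hu) (fun v hv => ih v hv)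
    rw [this]
  | swap a b l => intro u hu; exact pderivList_swap_head hU hf b a l hu
  | trans h1 h2 ih1 ih2 => intro u hu; rw [ih1 u hu, ih2 u hu]

lemma count_idxList (I : Fin k → ℕ) (j : Fin k) :
    (idxList I).count j = I j := by
  rw [idxList, List.count_flatMap]
  have : ∀ i : Fin k, (List.count j ∘ fun i => List.replicate (I i) i) i
      = if i = j then I i else 0 := by
    intro i; simp [List.count_replicate]
  rw [List.map_congr_left (fun i _ => this i)]
  rw [← Fin.sum_univ_def, Finset.sum_ite_eq']
  simp

lemma idxList_perm_count (L : List (Fin k)) : (idxList fun j => L.count j).Perm L :=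
  (List.perm_iff_count).2 fun a => by rw [count_idxList]

lemma idxList_add_single_perm (I : Fin k → ℕ) (j : Fin k) :
    (idxList (I + Pi.single j 1)).Perm (j :: idxList I) := by
  refine (List.perm_iff_count).2 fun a => ?_
  rw [count_idxList, List.count_cons, count_idxList]
  by_cases h : a = j
  · simp [h, Pi.single_apply]
  · simp [h, Pi.single_apply, Ne.symm h]

lemma pd_add_single (hU : IsOpen U) (hf : AnalyticOnNhd ℂ f U) (I : Fin k → ℕ) (j : Fin k)
    {u : Fin k → ℂ} (hu : u ∈ U) :
    pd (I + Pi.single j 1) f u = fderiv ℂ (pd I f) u (Pi.single j 1) :=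
  pderivList_perm_s11 hU hf (idxList_add_single_perm I j) u hu

lemma analyticOnNhd_pd (hf : AnalyticOnNhd ℂ f U) (I : Fin k → ℕ) :
    AnalyticOnNhd ℂ (pd I f) U := analyticOnNhd_pderivList hf _

lemma iteratedFDeriv_single (hU : IsOpen U) (hf : AnalyticOnNhd ℂ f U) :
    ∀ (n : ℕ) (r : Fin n → Fin k), ∀ u ∈ U,
      iteratedFDeriv ℂ n f u (fun i => Pi.single (r i) 1) = pderivList (List.ofFn r) f u := by
  intro n
  induction n with
  | zero => intro r u hu; simp [iteratedFDeriv_zero_apply]; rfl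
  | succ n ih =>
    intro r u hu
    rw [iteratedFDeriv_succ_apply_left]
    have heq : ∀ v ∈ U, pderivList (List.ofFn (Fin.tail r)) f v
        = iteratedFDeriv ℂ n f v (fun i => Pi.single (Fin.tail r i) 1) :=
      fun v hv => (ih _ v hv).symm
    have hofn : List.ofFn r = r 0 :: List.ofFn (Fin.tail r) := List.ofFn_succ
    rw [hofn]
    have hrfl : pderivList (r 0 :: List.ofFn (Fin.tail r)) f u
        = fderiv ℂ (pderivList (List.ofFn (Fin.tail r)) f) u (Pi.single (r 0) 1) := rfl
    rw [hrfl, Filter.EventuallyEq.fderiv_eq (Filter.eventuallyEq_of_mem (hU.mem_nhds hu) heq)]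
    have hd : DifferentiableAt ℂ (iteratedFDeriv ℂ n f) u :=
      ((hf.iteratedFDeriv n) u hu).differentiableAt
    set Aev := ContinuousMultilinearMap.apply ℂ (fun _ : Fin n => (Fin k → ℂ)) E
        (fun i => Pi.single (Fin.tail r i) 1) with hAev
    have h0 := (Aev.hasFDerivAt (x := iteratedFDeriv ℂ n f u)).comp u hd.hasFDerivAt
    have h1 : HasFDerivAt (fun v => iteratedFDeriv ℂ n f v (fun i => Pi.single (Fin.tail r i) 1))
        (Aev.comp (fderiv ℂ (iteratedFDeriv ℂ n f) u)) u := h0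
    rw [h1.fderiv]
    rfl
lemma contMultilinear_eq_zero_of_basis {n : ℕ}
    (T : ContinuousMultilinearMap ℂ (fun _ : Fin n => (Fin k → ℂ)) E)
    (h : ∀ r : Fin n → Fin k, (T fun i => Pi.single (r i) 1) = 0)
    (m : Fin n → (Fin k → ℂ)) : T m = 0 := by
  have hm : m = fun i => ∑ j : Fin k, m i j • (Pi.single j 1 : Fin k → ℂ) := by
    funext i j'
    simp [Pi.single_apply, Finset.sum_ite_eq']
  rw [hm]
  have := T.toMultilinearMap.map_sum
    (g := fun i j => m i j • (Pi.single j 1 : Fin k → ℂ))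
  simp only [ContinuousMultilinearMap.coe_coe] at this
  rw [this]
  refine Finset.sum_eq_zero fun r _ => ?_
  have := T.toMultilinearMap.map_smul_univ (fun i => m i (r i))
    (fun i => (Pi.single (r i) 1 : Fin k → ℂ))
  simp only [ContinuousMultilinearMap.coe_coe] at this
  rw [this, h r, smul_zero]

lemma eqOn_zero_of_pderivList_zero (hU : IsOpen U) (hUc : IsPreconnected U)
    (hf : AnalyticOnNhd ℂ f U) {u₀ : Fin k → ℂ} (hu₀ : u₀ ∈ U)
    (hz : ∀ L : List (Fin k), pderivList L f u₀ = 0) : Set.EqOn f 0 U := by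
  have hiter : ∀ n : ℕ, iteratedFDeriv ℂ n f u₀ = 0 := by
    intro n; ext m
    rw [ContinuousMultilinearMap.zero_apply]
    exact contMultilinear_eq_zero_of_basis _ (fun r => by
      rw [iteratedFDeriv_single hU hf n r u₀ hu₀, hz]) m
  obtain ⟨p, r, hp⟩ := hf u₀ hu₀
  have hev : f =ᶠ[nhds u₀] 0 := by
    have hball : EMetric.ball u₀ r ∈ nhds u₀ := EMetric.ball_mem_nhds _ hp.r_pos
    filter_upwards [hball] with v hv
    have hvy : v - u₀ ∈ EMetric.ball (0 : Fin k → ℂ) r := by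
      exact EMetric.mem_ball.2 (by rw [edist_zero_right, ← edist_eq_enorm_sub]; exact EMetric.mem_ball.1 hv)
    have hsum := hp.hasSum_iteratedFDeriv hvy
    simp only [hiter, ContinuousMultilinearMap.zero_apply, smul_zero] at hsum
    have : f (u₀ + (v - u₀)) = 0 := hsum.unique hasSum_zero
    simpa using this
  exact hf.eqOn_zero_of_preconnected_of_eventuallyEq_zero hUc hu₀ hev

lemma differentiableAt_finset_prod {ι : Type} (s : Finset ι)
    {f : ι → (Fin k → ℂ) → ℂ} {u : Fin k → ℂ}
    (hf : ∀ i ∈ s, DifferentiableAt ℂ (f i) u) :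
    DifferentiableAt ℂ (fun v => ∏ i ∈ s, f i v) u := by
  classical
  induction s using Finset.cons_induction with
  | empty => simpa using differentiableAt_const (1 : ℂ)
  | cons a s ha ih =>
    simp only [Finset.prod_cons]
    exact (hf a (Finset.mem_cons_self a s)).mul
      (ih fun i hi => hf i (Finset.mem_cons_of_mem hi))

lemma differentiableAt_det {m : ℕ} {M : (Fin k → ℂ) → Matrix (Fin m) (Fin m) ℂ}
    {u : Fin k → ℂ} (h : ∀ i j, DifferentiableAt ℂ (fun v => M v i j) u) :
    DifferentiableAt ℂ (fun v => (M v).det) u := by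
  classical
  have hrw : (fun v => (M v).det) = fun v =>
      ∑ σ : Equiv.Perm (Fin m), ((Equiv.Perm.sign σ : ℤ) : ℂ) * ∏ i, M v (σ i) i := by
    funext v
    rw [Matrix.det_apply]
    refine Finset.sum_congr rfl fun σ _ => ?_
    rw [Units.smul_def, zsmul_eq_mul]
  rw [hrw]
  refine DifferentiableAt.fun_sum fun σ _ => DifferentiableAt.const_mul ?_ _
  exact differentiableAt_finset_prod _ fun i _ => h (σ i) i

lemma pderivList_clm_comp {F : Type} [NormedAddCommGroup F] [NormedSpace ℂ F]
    (hU : IsOpen U) (hf : AnalyticOnNhd ℂ f U) (A : E →L[ℂ] F) (L : List (Fin k)) :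
    ∀ u ∈ U, pderivList L (fun v => A (f v)) u = A (pderivList L f u) := by
  induction L with
  | nil => intro u _; rfl
  | cons a L ih =>
    intro u hu
    have heq : (fun v => A (pderivList L f v)) =ᶠ[nhds u] pderivList L (fun v => A (f v)) :=
      Filter.eventuallyEq_of_mem (hU.mem_nhds hu) (fun v hv => (ih v hv).symm)
    have hd : DifferentiableAt ℂ (pderivList L f) u :=
      ((analyticOnNhd_pderivList hf L) u hu).differentiableAt
    have h0 := (A.hasFDerivAt (x := pderivList L f u)).comp u hd.hasFDerivAt
    have h1 : HasFDerivAt (fun v => A (pderivList L f v))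
        (A.comp (fderiv ℂ (pderivList L f) u)) u := h0
    show fderiv ℂ (pderivList L (fun v => A (f v))) u (Pi.single a 1) = _
    rw [← heq.fderiv_eq, h1.fderiv]
    rfl

end AuxLemmas

section Osc

variable {k N : ℕ} {U : Set (Fin k → ℂ)}
  {xhat : (Fin k → ℂ) → (Fin (N + 1) → ℂ)}

lemma pd_mem_osc {s : ℕ} {I : Fin k → ℕ} (hI : (∑ j, I j) ≤ s) (u : Fin k → ℂ) :
    pd I xhat u ∈ osc xhat s u :=
  Submodule.subset_span ⟨I, hI, rfl⟩

lemma osc_mono {s s' : ℕ} (h : s ≤ s') (u : Fin k → ℂ) :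
    osc xhat s u ≤ osc xhat s' u :=
  Submodule.span_mono fun _ ⟨I, hI, hy⟩ => ⟨I, hI.trans h, hy⟩

lemma osc_le_iff {s : ℕ} {u : Fin k → ℂ} {W : Submodule ℂ (Fin (N + 1) → ℂ)} :
    osc xhat s u ≤ W ↔ ∀ I : Fin k → ℕ, (∑ j, I j) ≤ s → pd I xhat u ∈ W := by
  rw [osc, Submodule.span_le]
  constructor
  · intro h I hI; exact h ⟨I, hI, rfl⟩
  · rintro h y ⟨I, hI, rfl⟩; exact h I hI

/-- Key lemma: differentiating a section of the (constant-rank, stable) osculating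
distribution stays inside it. -/
lemma key_deriv_mem {t : ℕ} (hUo : IsOpen U) (hxa : AnalyticOnNhd ℂ xhat U) (ht : 1 ≤ t)
    (hstab : ∀ u ∈ U, osc xhat t u = osc xhat (t - 1) u)
    (hdim : ∀ u ∈ U, ∀ v ∈ U,
      Module.finrank ℂ ↥(osc xhat (t - 1) u) = Module.finrank ℂ ↥(osc xhat (t - 1) v))
    {g : (Fin k → ℂ) → (Fin (N + 1) → ℂ)} (hg : AnalyticOnNhd ℂ g U)
    (hgmem : ∀ v ∈ U, g v ∈ osc xhat (t - 1) v)
    {u : Fin k → ℂ} (hu : u ∈ U) (j : Fin k) :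
    fderiv ℂ g u (Pi.single j 1) ∈ osc xhat (t - 1) u := by
  classical
  set S : Set (Fin (N + 1) → ℂ) :=
    {y | ∃ I : Fin k → ℕ, (∑ j, I j) ≤ t - 1 ∧ y = pd I xhat u} with hSdef
  obtain ⟨b, hbS, hbspan, hbind⟩ := exists_linearIndependent ℂ S
  have hbfin : b.Finite := hbind.set_finite_of_isNoetherian
  haveI : Fintype b := hbfin.fintype
  set m := Fintype.card b with hm
  set en : Fin m ≃ b := (Fintype.equivFin b).symm with hen
  have hchoice : ∀ i : Fin m,
      ∃ I : Fin k → ℕ, (∑ j, I j) ≤ t - 1 ∧ ((en i : b) : Fin (N + 1) → ℂ) = pd I xhat u :=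
    fun i => hbS (en i).2
  set Ii : Fin m → (Fin k → ℕ) := fun i => Classical.choose (hchoice i) with hIi
  have hIile : ∀ i, (∑ j, Ii i j) ≤ t - 1 := fun i => (Classical.choose_spec (hchoice i)).1
  set e : Fin m → (Fin k → ℂ) → (Fin (N + 1) → ℂ) := fun i v => pd (Ii i) xhat v with he
  have heu : ∀ i, e i u = ((en i : b) : Fin (N + 1) → ℂ) :=
    fun i => (Classical.choose_spec (hchoice i)).2.symm
  have hindu : LinearIndependent ℂ (fun i => e i u) := by
    have : (fun i => e i u) = (fun y : b => (y : Fin (N + 1) → ℂ)) ∘ en := by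
      funext i; exact heu i
    rw [this]
    exact hbind.comp en en.injective
  have hspanW : Submodule.span ℂ (Set.range fun i => e i u) = osc xhat (t - 1) u := by
    have h1 : (Set.range fun i => e i u) = b := by
      have : (fun i => e i u) = (fun y : b => (y : Fin (N + 1) → ℂ)) ∘ en := by
        funext i; exact heu i
      rw [this, Set.range_comp, Equiv.range_eq_univ, Set.image_univ, Subtype.range_coe]
    rw [h1, hbspan]; rfl
  have hfrW : Module.finrank ℂ ↥(osc xhat (t - 1) u) = m := by
    rw [← hspanW, finrank_span_eq_card hindu, Fintype.card_fin]
  -- the linear map sending coefficients to the combination of the basis at u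
  set T : (Fin m → ℂ) →ₗ[ℂ] (Fin (N + 1) → ℂ) :=
    { toFun := fun a => ∑ i, a i • e i u
      map_add' := fun a b => by simp [add_smul, Finset.sum_add_distrib]
      map_smul' := fun cc a => by simp [smul_smul, Finset.smul_sum] } with hT
  have hTsingle : ∀ i : Fin m, T (Pi.single i 1) = e i u := by
    intro i
    have hsh : T (Pi.single i 1) = ∑ i', (Pi.single i 1 : Fin m → ℂ) i' • e i' u := rfl
    rw [hsh, Finset.sum_eq_single i]
    · simp
    · intro i' _ hne; simp [Pi.single_apply, Ne.symm hne]
    · intro h; exact absurd (Finset.mem_univ i) h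
  have hTker : LinearMap.ker T = ⊥ := by
    rw [LinearMap.ker_eq_bot']
    intro a ha
    funext i
    exact Fintype.linearIndependent_iff.1 hindu a ha i
  obtain ⟨π, hπ⟩ := T.exists_leftInverse_of_injective hTker
  set B : (Fin k → ℂ) → Matrix (Fin m) (Fin m) ℂ :=
    fun v => Matrix.of fun i i' => π (e i' v) i with hB
  have hπT : ∀ z : Fin m → ℂ, π (T z) = z := fun z => by
    have := congrArg (fun (L : (Fin m → ℂ) →ₗ[ℂ] (Fin m → ℂ)) => L z) hπ
    simpa using this
  have hBu : B u = 1 := by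
    ext i i'
    show π (e i' u) i = (1 : Matrix (Fin m) (Fin m) ℂ) i i'
    rw [← hTsingle i', hπT, Matrix.one_apply, Pi.single_apply]
  -- analyticity/differentiability of everything in sight
  have hediff : ∀ i, ∀ v ∈ U, DifferentiableAt ℂ (e i) v :=
    fun i v hv => ((analyticOnNhd_pd hxa (Ii i)) v hv).differentiableAt
  set πc : (Fin (N + 1) → ℂ) →L[ℂ] (Fin m → ℂ) := LinearMap.toContinuousLinearMap π with hπc
  have hπce : ∀ y, πc y = π y := fun y => rfl
  have hBdiff : ∀ i i', DifferentiableAt ℂ (fun v => B v i i') u := by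
    intro i i'
    have h1 : DifferentiableAt ℂ (fun v => πc (e i' v)) u :=
      πc.differentiableAt.comp u (hediff i' u hu)
    have := (differentiableAt_pi.1 h1) i
    exact this
  have hdetB : DifferentiableAt ℂ (fun v => (B v).det) u := differentiableAt_det hBdiff
  have hdetBu : (B u).det = 1 := by rw [hBu, Matrix.det_one]
  have hne : {v | (B v).det ≠ 0} ∈ nhds u := by
    have : {z : ℂ | z ≠ 0} ∈ nhds ((B u).det) := by
      rw [hdetBu]; exact isOpen_compl_singleton.mem_nhds (by norm_num)
    exact hdetB.continuousAt.preimage_mem_nhds this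
  have hVmem : U ∩ {v | (B v).det ≠ 0} ∈ nhds u :=
    Filter.inter_mem (hUo.mem_nhds hu) hne
  set c : (Fin k → ℂ) → Fin m → ℂ :=
    fun v => ((B v).det)⁻¹ • ((B v).adjugate).mulVec (π (g v)) with hc
  have hπsum : ∀ (v : Fin k → ℂ) (a : Fin m → ℂ), π (∑ i, a i • e i v) = (B v).mulVec a := by
    intro v a
    rw [map_sum]
    funext i0
    simp only [Finset.sum_apply, Matrix.mulVec, dotProduct]
    refine Finset.sum_congr rfl fun i' _ => ?_
    rw [map_smul]
    show a i' * π (e i' v) i0 = B v i0 i' * a i'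
    rw [mul_comm]; rfl
  have hgc : ∀ v ∈ (U ∩ {v | (B v).det ≠ 0}), g v = ∑ i, c v i • e i v := by
    rintro v ⟨hvU, hvdet⟩
    have hindv : LinearIndependent ℂ (fun i => e i v) := by
      rw [Fintype.linearIndependent_iff]
      intro a ha i
      have h1 : (B v).mulVec a = 0 := by rw [← hπsum v a, ha, map_zero]
      have h2 : a = 0 := by
        have h3 := congrArg (fun w => ((B v)⁻¹).mulVec w) h1
        simpa [Matrix.mulVec_mulVec, Matrix.nonsing_inv_mul (B v)
          (isUnit_iff_ne_zero.2 hvdet)] using h3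
      rw [h2]; rfl
    have hle : Submodule.span ℂ (Set.range fun i => e i v) ≤ osc xhat (t - 1) v := by
      rw [Submodule.span_le]
      rintro y ⟨i, rfl⟩
      exact pd_mem_osc (hIile i) v
    have hfr1 : Module.finrank ℂ ↥(Submodule.span ℂ (Set.range fun i => e i v)) = m := by
      rw [finrank_span_eq_card hindv, Fintype.card_fin]
    have hfr2 : Module.finrank ℂ ↥(osc xhat (t - 1) v) = m := by
      rw [hdim v hvU u hu, hfrW]
    have hspanv : Submodule.span ℂ (Set.range fun i => e i v) = osc xhat (t - 1) v :=
      Submodule.eq_of_le_of_finrank_le hle (by rw [hfr1, hfr2])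
    have hgv : g v ∈ Submodule.span ℂ (Set.range fun i => e i v) := by
      rw [hspanv]; exact hgmem v hvU
    obtain ⟨d, hd⟩ := (Submodule.mem_span_range_iff_exists_fun ℂ).1 hgv
    have hπg : π (g v) = (B v).mulVec d := by rw [← hd]; exact hπsum v d
    have hcd : c v = d := by
      show ((B v).det)⁻¹ • ((B v).adjugate).mulVec (π (g v)) = d
      rw [hπg, Matrix.mulVec_mulVec, Matrix.adjugate_mul, Matrix.smul_mulVec,
        Matrix.one_mulVec, smul_smul, inv_mul_cancel₀ hvdet, one_smul]
    rw [hcd, ← hd]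
  -- now differentiate
  have hev : g =ᶠ[nhds u] fun v => ∑ i, c v i • e i v :=
    Filter.eventuallyEq_of_mem hVmem hgc
  have hπgd : ∀ i', DifferentiableAt ℂ (fun v => π (g v) i') u := by
    intro i'
    have h1 : DifferentiableAt ℂ (fun v => πc (g v)) u :=
      πc.differentiableAt.comp u ((hg u hu).differentiableAt)
    simpa [hπce] using (differentiableAt_pi.1 h1) i'
  have hcdiff : ∀ i, DifferentiableAt ℂ (fun v => c v i) u := by
    intro i
    have hdetinv : DifferentiableAt ℂ (fun v => ((B v).det)⁻¹) u :=
      hdetB.inv (by rw [hdetBu]; norm_num)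
    have hadj : ∀ i', DifferentiableAt ℂ (fun v => (B v).adjugate i i') u := by
      intro i'
      have hrw : (fun v => (B v).adjugate i i')
          = fun v => ((B v).updateRow i' (Pi.single i 1)).det := by
        funext v; rw [Matrix.adjugate_apply]
      rw [hrw]
      refine differentiableAt_det fun r cc => ?_
      by_cases hr : r = i'
      · simp only [Matrix.updateRow_apply, hr, if_pos rfl]
        exact differentiableAt_const _
      · simp only [Matrix.updateRow_apply, if_neg hr]
        exact hBdiff r cc
    have hrw : (fun v => c v i)
        = fun v => ((B v).det)⁻¹ * ∑ i', (B v).adjugate i i' * π (g v) i' := by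
      funext v
      show (((B v).det)⁻¹ • ((B v).adjugate).mulVec (π (g v))) i = _
      rfl
    rw [hrw]
    exact hdetinv.mul (DifferentiableAt.fun_sum fun i' _ => (hadj i').mul (hπgd i'))
  have hder : fderiv ℂ g u = fderiv ℂ (fun v => ∑ i, c v i • e i v) u := hev.fderiv_eq
  rw [hder]
  have hfd : fderiv ℂ (fun v => ∑ i, c v i • e i v) u =
      ∑ i, fderiv ℂ (fun v => c v i • e i v) u :=
    fderiv_fun_sum (fun i _ => (hcdiff i).smul (hediff i u hu))
  rw [hfd, ContinuousLinearMap.sum_apply]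
  refine Submodule.sum_mem _ fun i _ => ?_
  rw [fderiv_fun_smul (hcdiff i) (hediff i u hu)]
  rw [ContinuousLinearMap.add_apply, ContinuousLinearMap.smul_apply,
    ContinuousLinearMap.smulRight_apply]
  refine Submodule.add_mem _ (Submodule.smul_mem _ _ ?_) (Submodule.smul_mem _ _ ?_)
  · have h1 : fderiv ℂ (pd (Ii i) xhat) u (Pi.single j 1) = pd (Ii i + Pi.single j 1) xhat u :=
      (pd_add_single hUo hxa (Ii i) j hu).symm
    show fderiv ℂ (e i) u (Pi.single j 1) ∈ _
    have h2 : e i = pd (Ii i) xhat := rfl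
    rw [h2, h1]
    have hsum1 : (∑ a, (Ii i + Pi.single j 1 : Fin k → ℕ) a) ≤ t := by
      have h3 : (∑ a, (Ii i + Pi.single j 1 : Fin k → ℕ) a) = (∑ a, Ii i a) + 1 := by
        simp [Finset.sum_add_distrib, Pi.single_apply, Finset.sum_ite_eq']
      have := hIile i
      omega
    have h4 := pd_mem_osc (xhat := xhat) hsum1 u
    rwa [hstab u hu] at h4
  · exact pd_mem_osc (hIile i) u


lemma all_pd_mem {t : ℕ} (hUo : IsOpen U) (hxa : AnalyticOnNhd ℂ xhat U) (ht : 1 ≤ t)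
    (hstab : ∀ u ∈ U, osc xhat t u = osc xhat (t - 1) u)
    (hdim : ∀ u ∈ U, ∀ v ∈ U,
      Module.finrank ℂ ↥(osc xhat (t - 1) u) = Module.finrank ℂ ↥(osc xhat (t - 1) v)) :
    ∀ (s : ℕ) (u : Fin k → ℂ), u ∈ U → ∀ I : Fin k → ℕ, (∑ j, I j) ≤ s →
      pd I xhat u ∈ osc xhat (t - 1) u := by
  intro s
  induction s with
  | zero => intro u hu I hI; exact pd_mem_osc (le_trans hI (Nat.zero_le _)) u
  | succ s ih =>
    intro u hu I hI
    by_cases hs : (∑ j, I j) ≤ s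
    · exact ih u hu I hs
    have hsum : (∑ j, I j) = s + 1 := le_antisymm hI (not_le.1 hs)
    have hx0 : ∃ j, I j ≠ 0 := by
      by_contra h
      push_neg at h
      rw [Finset.sum_congr rfl fun a _ => h a] at hsum
      simp at hsum
    obtain ⟨j0, hj0⟩ := hx0
    set I' : Fin k → ℕ := fun a => I a - (Pi.single j0 1 : Fin k → ℕ) a with hI'
    have hII' : I' + Pi.single j0 1 = I := by
      funext a
      by_cases ha : a = j0
      · subst ha
        have h1 : 1 ≤ I a := Nat.one_le_iff_ne_zero.2 hj0
        simp only [Pi.add_apply, hI', Pi.single_eq_same]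
        omega
      · simp [hI', Pi.single_apply, ha]
    have hsumI' : (∑ j, I' j) ≤ s := by
      have h1 : (∑ a, (I' + Pi.single j0 1 : Fin k → ℕ) a) = s + 1 := by rw [hII', hsum]
      have h2 : (∑ a, (I' + Pi.single j0 1 : Fin k → ℕ) a)
          = (∑ a, I' a) + (∑ a, (Pi.single j0 1 : Fin k → ℕ) a) := by
        simp [Finset.sum_add_distrib]
      have h3 : (∑ a, (Pi.single j0 1 : Fin k → ℕ) a) = 1 := by
        simp [Pi.single_apply, Finset.sum_ite_eq']
      omega
    have hgm : ∀ v ∈ U, pd I' xhat v ∈ osc xhat (t - 1) v := fun v hv => ih v hv I' hsumI'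
    have hkey := key_deriv_mem hUo hxa ht hstab hdim (analyticOnNhd_pd hxa I') hgm hu j0
    rw [← hII', pd_add_single hUo hxa I' j0 hu]
    exact hkey

lemma idxList_zero : idxList (fun _ : Fin k => 0) = ([] : List (Fin k)) := by
  simp [idxList]

lemma pd_zero_eq (u : Fin k → ℂ) : pd (fun _ : Fin k => 0) xhat u = xhat u := by
  rw [pd, idxList_zero]; rfl

end Osc


/-- If the `t`-th osculating space equals the `(t-1)`-th one at every point and the latter has
constant dimension, then the osculating space is a fixed subspace and `V` lies in the linear
space `ℙ^{d_{t-1}} = ℙ(T^(t-1)(u₀))`. -/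
theorem osc_constant_and_subset_linear_of_stable (k N t : ℕ) (hk : 1 ≤ k) (hN : 1 ≤ N)
    (ht : 1 ≤ t)
    (U : Set (Fin k → ℂ)) (hUo : IsOpen U) (hUc : IsPreconnected U)
    (u₀ : Fin k → ℂ) (hu₀ : u₀ ∈ U)
    (x : (Fin k → ℂ) → (Fin N → ℂ)) (hx : AnalyticOnNhd ℂ x U)
    (hstab : ∀ u ∈ U, osc (coneLift x) t u = osc (coneLift x) (t - 1) u)
    (hconst : ∀ u ∈ U, Module.finrank ℂ ↥(osc (coneLift x) (t - 1) u) =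
      Module.finrank ℂ ↥(osc (coneLift x) (t - 1) u₀)) :
    (∀ u ∈ U, osc (coneLift x) (t - 1) u = osc (coneLift x) (t - 1) u₀) ∧
      ∀ u ∈ U, coneLift x u ∈ osc (coneLift x) (t - 1) u₀ := by
  classical
  set xhat := coneLift x with hxhat
  -- analyticity of the lift
  have hxa : AnalyticOnNhd ℂ xhat U := by
    set Lc : (Fin N → ℂ) →ₗ[ℂ] (Fin (N + 1) → ℂ) :=
      { toFun := fun y => Fin.cons 0 y
        map_add' := fun a b => by
          funext i; refine Fin.cases ?_ ?_ i <;> simp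
        map_smul' := fun c a => by
          funext i; refine Fin.cases ?_ ?_ i <;> simp }
    have hrw : xhat = fun u => (Fin.cons 1 0 : Fin (N + 1) → ℂ) + Lc (x u) := by
      funext u i
      refine Fin.cases ?_ ?_ i <;> simp [hxhat, coneLift, Lc]
    rw [hrw]
    intro u hu
    have h1 : AnalyticAt ℂ (fun u => Lc (x u)) u := by
      have h2 := ((LinearMap.toContinuousLinearMap Lc).analyticAt (x u)).comp (hx u hu)
      exact h2
    exact analyticAt_const.add h1
  have hdim : ∀ u ∈ U, ∀ v ∈ U,
      Module.finrank ℂ ↥(osc xhat (t - 1) u) = Module.finrank ℂ ↥(osc xhat (t - 1) v) :=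
    fun u hu v hv => by rw [hconst u hu, hconst v hv]
  have hall := all_pd_mem hUo hxa ht hstab hdim
  set W := osc xhat (t - 1) u₀ with hW
  -- every iterated derivative at u₀ lies in W
  have hList : ∀ M : List (Fin k), pderivList M xhat u₀ ∈ W := by
    intro M
    have hperm := pderivList_perm_s11 hUo hxa (idxList_perm_count M) u₀ hu₀
    have hmem := hall (∑ j, M.count j) u₀ hu₀ (fun j => M.count j) le_rfl
    have h2 : pd (fun j => M.count j) xhat u₀ = pderivList M xhat u₀ := hperm
    rwa [h2] at hmem
  -- all the generators at any point of U lie in W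
  have hIu : ∀ (I : Fin k → ℕ), ∀ u ∈ U, pd I xhat u ∈ W := by
    intro I u hu
    by_contra hnot
    obtain ⟨ξ, hξx, hξW⟩ := Submodule.exists_dual_map_eq_bot_of_notMem hnot inferInstance
    have hξ0 : ∀ y ∈ W, ξ y = 0 := by
      intro y hy
      have h1 : ξ y ∈ W.map ξ := ⟨y, hy, rfl⟩
      rw [hξW] at h1
      simpa using h1
    set ξc : (Fin (N + 1) → ℂ) →L[ℂ] ℂ := LinearMap.toContinuousLinearMap ξ with hξc
    set φ : (Fin k → ℂ) → ℂ := fun v => ξc (pd I xhat v) with hφ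
    have hφa : AnalyticOnNhd ℂ φ U :=
      fun v hv => (ξc.analyticAt _).comp ((analyticOnNhd_pd hxa I) v hv)
    have hφz : ∀ L : List (Fin k), pderivList L φ u₀ = 0 := by
      intro L
      have h1 : pderivList L φ u₀ = ξc (pderivList L (pd I xhat) u₀) :=
        pderivList_clm_comp hUo (analyticOnNhd_pd hxa I) ξc L u₀ hu₀
      have h2 : pderivList L (pd I xhat) = pderivList (L ++ idxList I) xhat :=
        (pderivList_append L (idxList I) xhat).symm
      rw [h1, h2]
      exact hξ0 _ (hList _)
    have hzero := eqOn_zero_of_pderivList_zero hUo hUc hφa hu₀ hφz hu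
    exact hξx hzero
  have hle : ∀ u ∈ U, osc xhat (t - 1) u ≤ W :=
    fun u hu => osc_le_iff.2 fun I _ => hIu I u hu
  have heq : ∀ u ∈ U, osc xhat (t - 1) u = W := by
    intro u hu
    refine Submodule.eq_of_le_of_finrank_le (hle u hu) ?_
    rw [hconst u hu]
  refine ⟨heq, fun u hu => ?_⟩
  have h1 : pd (fun _ : Fin k => 0) xhat u ∈ osc xhat (t - 1) u :=
    pd_mem_osc (by simp) u
  rw [pd_zero_eq] at h1
  rw [← heq u hu]
  exact h1

end
end
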